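/- Suppose there are n ≥ 2 arms with loss sequences ℓ_{i,t} whose limits ν_i exist and satisfy ν_1 < ν_2 ≤ … ≤ ν_n, let γ̄ be a common envelope for all arms, and suppose the budget satisfies B ≥ n·⌈log₂ n⌉ (so that every round allocates at least one pull). Then the output arm î_SH of the Successive Halving algorithm with budget B satisfies ν_{î_SH} − ν_1 ≤ 2·⌈log₂ n⌉ · γ̄(⌊B/(n·⌈log₂ n⌉)⌋), for every admissible tie-breaking rule. -/

import Mathlib

open Filter Topology

/-- A run of the Successive Halving algorithm with budget `B` on `n` arms with loss
sequences `ℓ` (an arbitrary admissible tie-breaking rule): `S 0 = {1,…,n}`; for each round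
`k = 0,…,⌈log₂ n⌉ − 1`, the cumulative pull count is
`R_k = ∑_{j=0}^k ⌊B / (|S_j| · ⌈log₂ n⌉)⌋`, and `S (k+1) ⊆ S k` is a subset of size
`⌊|S_k|/2⌋` consisting of arms with the smallest values of `ℓ_{i,R_k}` among `i ∈ S k`. -/
def IsSHRun (n B : ℕ) (ℓ : Fin n → ℕ → ℝ) (S : ℕ → Finset (Fin n)) : Prop :=
  S 0 = Finset.univ ∧
  ∀ k < Nat.clog 2 n,
    S (k + 1) ⊆ S k ∧
    (S (k + 1)).card = (S k).card / 2 ∧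
    ∀ i ∈ S (k + 1), ∀ j ∈ S k, j ∉ S (k + 1) →
      ℓ i (∑ j' ∈ Finset.range (k + 1), B / ((S j').card * Nat.clog 2 n)) ≤
        ℓ j (∑ j' ∈ Finset.range (k + 1), B / ((S j').card * Nat.clog 2 n))

/-- **Successive Halving outputs a pretty good arm (Theorem 4, first part).**
With `n ≥ 2` arms (indexed by `Fin n`, arm `0` being arm 1 of the paper), loss sequences
`ℓ i` converging to limits `ν ⟨0⟩ < ν ⟨1⟩ ≤ … ≤ ν ⟨n-1⟩`, a common non-increasing envelope
`γ`, and a budget `B ≥ n·⌈log₂ n⌉` (so every round allocates at least one pull), every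
output arm `î` of every run of Successive Halving (i.e. for every admissible tie-breaking
rule) satisfies `ν_î − ν_1 ≤ 2·⌈log₂ n⌉·γ(⌊B/(n·⌈log₂ n⌉)⌋)`. -/
theorem successive_halving_pretty_good_arm
    (n B : ℕ) (hn : 2 ≤ n)
    (ℓ : Fin n → ℕ → ℝ) (ν : Fin n → ℝ)
    (hlim : ∀ i, Tendsto (fun t => ℓ i t) atTop (𝓝 (ν i)))
    (hmono : Monotone ν)
    (hbest : ν ⟨0, by omega⟩ < ν ⟨1, by omega⟩)
    (γ : ℕ → ℝ) (hγanti : Antitone γ)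
    (henv : ∀ i, ∀ t, 1 ≤ t → |ℓ i t - ν i| ≤ γ t)
    (hB : n * Nat.clog 2 n ≤ B)
    (S : ℕ → Finset (Fin n)) (hrun : IsSHRun n B ℓ S) :
    ∀ i ∈ S (Nat.clog 2 n),
      ν i - ν ⟨0, by omega⟩ ≤
        2 * (Nat.clog 2 n : ℝ) * γ (B / (n * Nat.clog 2 n)) := by
  intro i hi
  obtain ⟨hS0, hstep⟩ := hrun
  set K := Nat.clog 2 n with hK
  have hKpos : 0 < K := Nat.clog_pos (by norm_num) hn
  have hnKpos : 0 < n * K := Nat.mul_pos (by omega) hKpos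
  set t0 := B / (n * K) with ht0
  have ht0pos : 1 ≤ t0 := (Nat.one_le_div_iff hnKpos).2 hB
  have a0 : Fin n := ⟨0, by omega⟩
  have hγ0 : 0 ≤ γ t0 :=
    le_trans (abs_nonneg _) (henv ⟨0, by omega⟩ t0 ht0pos)
  -- cardinality of S m
  have hcard : ∀ m ≤ K, (S m).card = n / 2 ^ m := by
    intro m hm
    induction m with
    | zero => simp [hS0]
    | succ m ih =>
      have h := (hstep m (by omega)).2.1
      rw [h, ih (by omega), Nat.div_div_eq_div_mul, pow_succ]
  -- main inductive claim
  have main : ∀ m ≤ K, (⟨0, by omega⟩ : Fin n) ∈ S m ∨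
      ∀ j ∈ S m, ν j ≤ ν ⟨0, by omega⟩ + 2 * γ t0 := by
    intro m hm
    induction m with
    | zero => left; rw [hS0]; exact Finset.mem_univ _
    | succ m ih =>
      obtain ⟨hsub, hcard', hcomp⟩ := hstep m (by omega)
      rcases ih (by omega) with h0 | hbd
      · by_cases h0' : (⟨0, by omega⟩ : Fin n) ∈ S (m + 1)
        · left; exact h0'
        · right
          intro j hj
          set R := ∑ j' ∈ Finset.range (m + 1), B / ((S j').card * K) with hR
          have hfirst : B / ((S 0).card * K) = t0 := by
            rw [hS0]; simp [ht0]
          have hRge : t0 ≤ R := by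
            calc t0 = B / ((S 0).card * K) := hfirst.symm
              _ ≤ R := Finset.single_le_sum
                  (f := fun j' => B / ((S j').card * K))
                  (fun _ _ => Nat.zero_le _) (Finset.mem_range.2 (by omega))
          have hR1 : 1 ≤ R := le_trans ht0pos hRge
          have hℓ := hcomp j hj ⟨0, by omega⟩ h0 h0'
          have e1 := (abs_le.1 (henv j R hR1)).1
          have e2 := (abs_le.1 (henv ⟨0, by omega⟩ R hR1)).2
          have hγR : γ R ≤ γ t0 := hγanti hRge
          linarith
      · right; intro j hj; exact hbd j (hsub hj)
  have hK1 : (1 : ℝ) ≤ (K : ℝ) := by exact_mod_cast hKpos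
  rcases main K le_rfl with h0 | hbd
  · -- S K is a singleton containing arm 0, so i = arm 0
    have hc : (S K).card = n / 2 ^ K := hcard K le_rfl
    have hle : n ≤ 2 ^ K := Nat.le_pow_clog (by norm_num) n
    have hone : (S K).card ≤ 1 := by
      rw [hc]
      calc n / 2 ^ K ≤ 2 ^ K / 2 ^ K := Nat.div_le_div_right hle
        _ = 1 := Nat.div_self (by positivity)
    have : i = (⟨0, by omega⟩ : Fin n) := Finset.card_le_one.1 hone i hi _ h0
    rw [this]
    have : (0 : ℝ) ≤ 2 * (K : ℝ) * γ t0 := by positivity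
    linarith
  · have hb := hbd i hi
    nlinarith
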